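/- For every K > 0 there exists a positive integer m which is a nonzero sum of two squares such that every nonzero sum of two squares n with n > m satisfies n − m > K. Equivalently, if λ₁ ≤ λ₂ ≤ λ₃ ≤ … is the increasing enumeration of the set {j₁² + j₂² : (j₁,j₂) ∈ ℤ² \ {0}} (the eigenvalues of the Stokes operator on the two-dimensional torus), then limsup_{N→∞} (λ_{N+1} − λ_N) = ∞. -/

import Mathlib

open Nat

/-- An infinite increasing sequence of primes congruent to 3 mod 4. -/
private noncomputable def P3 : ℕ → ℕ
  | 0 => (Nat.forall_exists_prime_gt_and_eq_mod (q := 4) (a := 3) (by decide) 0).choose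
  | n + 1 =>
      (Nat.forall_exists_prime_gt_and_eq_mod (q := 4) (a := 3) (by decide) (P3 n)).choose

private lemma P3_spec (n : ℕ) : P3 n.succ > P3 n ∧ (P3 n.succ).Prime ∧
    ((P3 n.succ : ZMod 4) = 3) := by
  have h := (Nat.forall_exists_prime_gt_and_eq_mod (q := 4) (a := 3) (by decide)
    (P3 n)).choose_spec
  exact ⟨h.1, h.2.1, h.2.2⟩

private lemma P3_prime (n : ℕ) : (P3 n).Prime := by
  cases n with
  | zero =>
      exact (Nat.forall_exists_prime_gt_and_eq_mod (q := 4) (a := 3) (by decide)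
        0).choose_spec.2.1
  | succ n => exact (P3_spec n).2.1

private lemma P3_mod4 (n : ℕ) : P3 n % 4 = 3 := by
  have h : ((P3 n : ZMod 4) = 3) := by
    cases n with
    | zero =>
        exact (Nat.forall_exists_prime_gt_and_eq_mod (q := 4) (a := 3) (by decide)
          0).choose_spec.2.2
    | succ n => exact (P3_spec n).2.2
  have := congrArg ZMod.val h
  rwa [ZMod.val_natCast] at this

private lemma P3_strictMono : StrictMono P3 :=
  strictMono_nat_of_lt_succ fun n => (P3_spec n).1

private lemma P3_three_le (n : ℕ) : 3 ≤ P3 n := by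
  have h := P3_mod4 n
  have := Nat.mod_le (P3 n) 4
  omega

private lemma P3_injective : Function.Injective P3 := P3_strictMono.injective

/-- A number divisible by a prime `p ≡ 3 mod 4` but not by `p ^ 2` is not a sum of
two squares. -/
private lemma not_sq_add_sq {p n : ℕ} (hp : p.Prime) (hp4 : p % 4 = 3)
    (hdvd : p ∣ n) (hndvd : ¬ p ^ 2 ∣ n) (hn : n ≠ 0) : ¬ ∃ x y : ℕ, n = x ^ 2 + y ^ 2 := by
  intro h
  have hv := Nat.eq_sq_add_sq_iff.mp h p (Nat.mem_primeFactors.mpr ⟨hp, hdvd, hn⟩) hp4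
  haveI : Fact p.Prime := ⟨hp⟩
  have h1 : 1 ≤ padicValNat p n := one_le_padicValNat_of_dvd hn hdvd
  have h2 : padicValNat p n < 2 := by
    by_contra hle
    push_neg at hle
    exact hndvd (dvd_trans (pow_dvd_pow p hle) pow_padicValNat_dvd)
  interval_cases h : padicValNat p n
  · exact (by decide : ¬ Even 1) hv

/-- Spectral gap property of the Stokes operator on the 2D torus:
the increasing sequence of nonzero sums of two squares has unbounded gaps. -/
theorem stokes_eigenvalue_gaps_unbounded (K : ℝ) (hK : 0 < K) :
    ∃ m : ℕ, 0 < m ∧ (∃ j : ℤ × ℤ, j ≠ 0 ∧ (m : ℤ) = j.1 ^ 2 + j.2 ^ 2) ∧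
      ∀ n : ℕ, m < n → (∃ j : ℤ × ℤ, j ≠ 0 ∧ (n : ℤ) = j.1 ^ 2 + j.2 ^ 2) →
        K < (n : ℝ) - (m : ℝ) := by
  classical
  set k : ℕ := ⌈K⌉₊ with hk
  have hk1 : 1 ≤ k := Nat.one_le_ceil_iff.mpr hK
  -- moduli and residues for CRT
  set s : ℕ → ℕ := fun i => (P3 i) ^ 2 with hs
  set a : ℕ → ℕ := fun i => (P3 i) ^ 2 + P3 i - (i + 1) with ha
  have hco : (List.range k).Pairwise (Function.onFun Nat.Coprime s) := by
    refine (List.pairwise_lt_range (n := k)).imp ?_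
    intro i j hij
    exact ((Nat.coprime_primes (P3_prime i) (P3_prime j)).mpr
      (fun h => (Nat.lt_irrefl i) (by simp [P3_injective h] at hij))).pow _ _
  obtain ⟨x, hx⟩ := Nat.chineseRemainderOfList a s (List.range k) hco
  -- key divisibility facts about x + i + 1 for i < k
  have hle : ∀ i : ℕ, i + 1 ≤ (P3 i) ^ 2 + P3 i := by
    intro i
    have h1 : i ≤ P3 i := P3_strictMono.le_apply
    have h2 : 3 ≤ P3 i := P3_three_le i
    nlinarith
  have key : ∀ i < k, P3 i ∣ x + i + 1 ∧ ¬ (P3 i) ^ 2 ∣ x + i + 1 := by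
    intro i hi
    have hmod : x ≡ a i [MOD s i] := hx i (List.mem_range.mpr hi)
    have hmod2 : x + (i + 1) ≡ (P3 i) ^ 2 + P3 i [MOD (P3 i) ^ 2] := by
      have := hmod.add_right (i + 1)
      rwa [ha, Nat.sub_add_cancel (hle i)] at this
    have hp3 : 3 ≤ P3 i := P3_three_le i
    constructor
    · have hmodp : x + (i + 1) ≡ (P3 i) ^ 2 + P3 i [MOD P3 i] :=
        hmod2.of_dvd (dvd_pow_self _ two_ne_zero)
      have : (P3 i) ∣ (P3 i) ^ 2 + P3 i := Dvd.dvd.add (dvd_pow_self _ two_ne_zero) dvd_rfl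
      have := (Nat.modEq_zero_iff_dvd.mpr this)
      have := hmodp.trans this
      have := Nat.modEq_zero_iff_dvd.mp this
      simpa [add_assoc] using this
    · intro hdvd
      have h0 : x + (i + 1) ≡ 0 [MOD (P3 i) ^ 2] := by
        rw [add_assoc] at hdvd
        exact Nat.modEq_zero_iff_dvd.mpr hdvd
      have : (P3 i) ^ 2 ∣ (P3 i) ^ 2 + P3 i :=
        Nat.modEq_zero_iff_dvd.mp (hmod2.symm.trans h0)
      have : (P3 i) ^ 2 ∣ P3 i := (Nat.dvd_add_right dvd_rfl).mp this
      have hle2 := Nat.le_of_dvd (by omega) this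
      nlinarith
  -- x + i + 1 is not a sum of two squares for i < k
  have hnot : ∀ i < k, ¬ ∃ x' y' : ℕ, x + i + 1 = x' ^ 2 + y' ^ 2 := by
    intro i hi
    exact not_sq_add_sq (P3_prime i) (P3_mod4 i) (key i hi).1 (key i hi).2 (by omega)
  -- x ≥ 1 : indeed P3 0 ∣ x + 1 so x + 1 ≥ 3
  have hx1 : 1 ≤ x := by
    have h := (key 0 (by omega)).1
    have := Nat.le_of_dvd (by omega) h
    have := P3_three_le 0
    omega
  -- the predicate "is a nonzero sum of two squares"
  set Q : ℕ → Prop := fun m => ∃ j : ℤ × ℤ, j ≠ 0 ∧ (m : ℤ) = j.1 ^ 2 + j.2 ^ 2 with hQ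
  have hQ1 : Q 1 := ⟨(1, 0), by simp, by norm_num⟩
  -- translation between ℤ and ℕ versions
  have hQnat : ∀ n : ℕ, 0 < n → Q n → ∃ x' y' : ℕ, n = x' ^ 2 + y' ^ 2 := by
    rintro n hn ⟨j, _, hj⟩
    refine ⟨j.1.natAbs, j.2.natAbs, ?_⟩
    have : (n : ℤ) = (j.1.natAbs : ℤ) ^ 2 + (j.2.natAbs : ℤ) ^ 2 := by
      rw [hj]; simp [sq, Int.natAbs_mul_self']
    exact_mod_cast this
  set m : ℕ := Nat.findGreatest Q x with hm
  have hm1 : 1 ≤ m := Nat.le_findGreatest hx1 hQ1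
  have hmx : m ≤ x := Nat.findGreatest_le x
  have hQm : Q m := Nat.findGreatest_spec hx1 hQ1
  refine ⟨m, by omega, hQm, ?_⟩
  intro n hmn hQn
  -- n cannot be ≤ x (else contradicts maximality), nor in (x, x+k]
  have hnx : x < n := by
    by_contra hle'
    push_neg at hle'
    exact Nat.findGreatest_is_greatest hmn hle' hQn
  have hnk : x + k < n := by
    by_contra hle'
    push_neg at hle'
    have hi : n - x - 1 < k := by omega
    exact hnot (n - x - 1) hi (by
      have : x + (n - x - 1) + 1 = n := by omega
      rw [this]
      exact hQnat n (by omega) hQn)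
  -- conclude
  have hKk : K ≤ (k : ℝ) := Nat.le_ceil K
  have : (m : ℝ) + K < (n : ℝ) := by
    have hnm : m + k < n := by omega
    have : (m : ℝ) + (k : ℝ) < (n : ℝ) := by exact_mod_cast Nat.lt_of_lt_of_le hnm le_rfl
    linarith
  linarith
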